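/- Let X₁,…,Xₙ be compacta, Aᵢ ⊆ Xᵢ closed subsets, and μᵢ ∈ MXᵢ capacities such that μᵢ(Xᵢ ∖ Aᵢ) = 0 for each i ∈ {1,…,n} (the value on the open complement taken via the sup-extension to open sets). Then for any continuous t-norm ∗ the tensor product satisfies ⊛̃ᵢ₌₁ⁿ μᵢ( ∏ᵢ₌₁ⁿ Xᵢ ∖ ∏ᵢ₌₁ⁿ Aᵢ ) = 0. -/

import Mathlib

open Set TopologicalSpace

universe u v

/-- A (upper-semicontinuous) capacity on a topological space `X`:
a normalized monotone set function on the closed subsets, upper semicontinuous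
in the sense of Zarichnyi–Nykyforchyn. -/
structure Capacity (X : Type u) [TopologicalSpace X] : Type u where
  toFun : Closeds X → ℝ
  empty' : toFun ⊥ = 0
  univ' : toFun ⊤ = 1
  mono' : ∀ F G : Closeds X, F ≤ G → toFun F ≤ toFun G
  usc' : ∀ (F : Closeds X) (a : ℝ), toFun F < a →
    ∃ O : Set X, IsOpen O ∧ (F : Set X) ⊆ O ∧ ∀ B : Closeds X, (B : Set X) ⊆ O → toFun B < a

namespace Capacity

variable {X : Type u} [TopologicalSpace X]

/-- Value of a capacity on (the closure of) an arbitrary set; on closed sets this is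
the value of the capacity. -/
def cval (ν : Capacity X) (A : Set X) : ℝ := ν.toFun ⟨closure A, isClosed_closure⟩

/-- The sup-extension of a capacity to open sets:
`ν(U) = sup {ν K : K closed, K ⊆ U}`. -/
noncomputable def oval (ν : Capacity X) (U : Set X) : ℝ :=
  sSup {r : ℝ | ∃ K : Closeds X, (K : Set X) ⊆ U ∧ ν.toFun K = r}

end Capacity

/-- The topology on the space `MX` of capacities, generated by the subbase
`O₋(F,a) = {c : c(F) < a}` (`F` closed) and `O₊(U,a) = {c : c(U) > a}` (`U` open). -/
instance capacityTopology (X : Type u) [TopologicalSpace X] : TopologicalSpace (Capacity X) :=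
  TopologicalSpace.generateFrom
    ({S | ∃ (F : Closeds X) (a : ℝ), a ∈ Icc (0:ℝ) 1 ∧
        S = {c : Capacity X | c.toFun F < a}} ∪
     {S | ∃ U : Set X, IsOpen U ∧ ∃ a ∈ Icc (0:ℝ) 1,
        S = {c : Capacity X | a < c.oval U}})

/-- A possibility capacity: `ν(A ∪ B) = max (ν A) (ν B)` on closed sets. -/
def IsPossibility {X : Type u} [TopologicalSpace X] (ν : Capacity X) : Prop :=
  ∀ A B : Closeds X, ν.toFun (A ⊔ B) = max (ν.toFun A) (ν.toFun B)

/-- A necessity capacity: `ν(A ∩ B) = min (ν A) (ν B)` on closed sets. -/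
def IsNecessity {X : Type u} [TopologicalSpace X] (ν : Capacity X) : Prop :=
  ∀ A B : Closeds X, ν.toFun (A ⊓ B) = min (ν.toFun A) (ν.toFun B)

/-- A triangular norm on `[0,1]`. -/
structure Tnorm : Type where
  toFun : ℝ → ℝ → ℝ
  mem' : ∀ s ∈ Icc (0:ℝ) 1, ∀ t ∈ Icc (0:ℝ) 1, toFun s t ∈ Icc (0:ℝ) 1
  comm' : ∀ s ∈ Icc (0:ℝ) 1, ∀ t ∈ Icc (0:ℝ) 1, toFun s t = toFun t s
  assoc' : ∀ s ∈ Icc (0:ℝ) 1, ∀ t ∈ Icc (0:ℝ) 1, ∀ r ∈ Icc (0:ℝ) 1,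
    toFun (toFun s t) r = toFun s (toFun t r)
  mono' : ∀ s₁ ∈ Icc (0:ℝ) 1, ∀ s₂ ∈ Icc (0:ℝ) 1, ∀ t₁ ∈ Icc (0:ℝ) 1, ∀ t₂ ∈ Icc (0:ℝ) 1,
    s₁ ≤ s₂ → t₁ ≤ t₂ → toFun s₁ t₁ ≤ toFun s₂ t₂
  one' : ∀ s ∈ Icc (0:ℝ) 1, toFun s 1 = s

/-- Continuity of a t-norm (on the unit square). -/
def Tnorm.Cont (star : Tnorm) : Prop :=
  ContinuousOn (fun q : ℝ × ℝ => star.toFun q.1 q.2) (Icc 0 1 ×ˢ Icc 0 1)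

/-- The t-normed (fuzzy) integral `∫^{∨∗} f dν = sup { ν(f⁻¹[t,1]) ∗ t : t ∈ [0,1] }`. -/
noncomputable def tInt {X : Type u} [TopologicalSpace X] (star : Tnorm) (ν : Capacity X) (f : X → ℝ) : ℝ :=
  sSup {r : ℝ | ∃ t ∈ Icc (0:ℝ) 1, r = star.toFun (ν.cval (f ⁻¹' Icc t 1)) t}
/-- Value of the binary tensor product generated by a t-norm `∗`:
`μ₁ ⊛̃ μ₂(B) = sup { μ₁({x : μ₂({y : (x,y) ∈ B}) ≥ t}) ∗ t : t ∈ [0,1] }`. -/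
noncomputable def tensorVal₂ {X : Type u} {Y : Type v} [TopologicalSpace X] [TopologicalSpace Y]
    (ast : Tnorm) (μ₁ : Capacity X) (μ₂ : Capacity Y) (B : Set (X × Y)) : ℝ :=
  sSup {r : ℝ | ∃ t ∈ Icc (0:ℝ) 1,
    r = ast.toFun (μ₁.cval {x : X | t ≤ μ₂.cval {y : Y | (x, y) ∈ B}}) t}

/-- `IsTensorRec ast μ τ` says that `τ` is the `m`-fold tensor product (generated by
the t-norm `ast`) of the capacities `μ j`, defined by iteration of the binary tensor
product, splitting off the first coordinate at each step. -/
def IsTensorRec (ast : Tnorm) : ∀ {m : ℕ} {X : Fin m → Type u}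
    [inst : ∀ j, TopologicalSpace (X j)],
    (∀ j, Capacity (X j)) → Capacity (∀ j, X j) → Prop
  | 0, _, _, _, _ => True
  | (m+1), X, inst, μ, τ =>
    letI := inst
    ∃ σ : Capacity (∀ k : Fin m, X ((0 : Fin (m+1)).succAbove k)),
      IsTensorRec ast (fun k => μ ((0 : Fin (m+1)).succAbove k)) σ ∧
      ∀ B : Set (∀ j, X j), IsClosed B →
        τ.cval B = tensorVal₂ ast (μ 0) σ
          ((fun z : ∀ j, X j =>
            ((z 0 : X 0), fun k : Fin m => z ((0 : Fin (m+1)).succAbove k))) '' B)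

namespace Capacity
variable {X : Type u} [TopologicalSpace X]

lemma toFun_nonneg (ν : Capacity X) (F : Closeds X) : 0 ≤ ν.toFun F := by
  rw [← ν.empty']; exact ν.mono' _ _ bot_le

lemma toFun_le_one (ν : Capacity X) (F : Closeds X) : ν.toFun F ≤ 1 := by
  rw [← ν.univ']; exact ν.mono' _ _ le_top

lemma cval_of_isClosed (ν : Capacity X) {A : Set X} (h : IsClosed A) :
    ν.cval A = ν.toFun ⟨A, h⟩ := by
  unfold cval; congr 1; exact Closeds.ext h.closure_eq

lemma cval_nonneg (ν : Capacity X) (A : Set X) : 0 ≤ ν.cval A := ν.toFun_nonneg _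
lemma cval_le_one (ν : Capacity X) (A : Set X) : ν.cval A ≤ 1 := ν.toFun_le_one _
lemma cval_mem (ν : Capacity X) (A : Set X) : ν.cval A ∈ Icc (0:ℝ) 1 :=
  ⟨ν.cval_nonneg A, ν.cval_le_one A⟩

lemma toFun_eq_zero_of_oval {ν : Capacity X} {U : Set X} (h : ν.oval U = 0)
    (K : Closeds X) (hK : (K : Set X) ⊆ U) : ν.toFun K = 0 := by
  have hle : ν.toFun K ≤ ν.oval U := by
    apply le_csSup
    · exact ⟨1, by rintro r ⟨L, _, rfl⟩; exact ν.toFun_le_one L⟩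
    · exact ⟨K, hK, rfl⟩
  have := ν.toFun_nonneg K
  linarith [h ▸ hle]

lemma oval_eq_zero {ν : Capacity X} {U : Set X}
    (h : ∀ K : Closeds X, (K : Set X) ⊆ U → ν.toFun K = 0) : ν.oval U = 0 := by
  have : {r : ℝ | ∃ K : Closeds X, (K : Set X) ⊆ U ∧ ν.toFun K = r} = {0} := by
    apply Set.eq_singleton_iff_unique_mem.2
    constructor
    · exact ⟨⊥, by simp, ν.empty'⟩
    · rintro r ⟨K, hK, rfl⟩; exact h K hK
  rw [oval, this, csSup_singleton]
end Capacity

lemma Tnorm.zero_left (ast : Tnorm) {t : ℝ} (ht : t ∈ Icc (0:ℝ) 1) :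
    ast.toFun 0 t = 0 := by
  have h01 : (0:ℝ) ∈ Icc (0:ℝ) 1 := by constructor <;> norm_num
  have h11 : (1:ℝ) ∈ Icc (0:ℝ) 1 := by constructor <;> norm_num
  have hle : ast.toFun 0 t ≤ ast.toFun 0 1 :=
    ast.mono' 0 h01 0 h01 t ht 1 h11 le_rfl ht.2
  have h0 : ast.toFun 0 1 = 0 := ast.one' 0 h01
  have hge := (ast.mem' 0 h01 t ht).1
  linarith

lemma Tnorm.zero_right (ast : Tnorm) {s : ℝ} (hs : s ∈ Icc (0:ℝ) 1) :
    ast.toFun s 0 = 0 := by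
  have h01 : (0:ℝ) ∈ Icc (0:ℝ) 1 := by constructor <;> norm_num
  rw [ast.comm' s hs 0 h01]; exact ast.zero_left hs

/-- USC of the slice value function, via the tube lemma / closed projection. -/
lemma slice_usc {X : Type u} {Y : Type v} [TopologicalSpace X] [TopologicalSpace Y]
    [CompactSpace Y] {B : Set (X × Y)} (hB : IsClosed B) (σ : Capacity Y) {t : ℝ}
    {x₀ : X} (hx₀ : σ.cval {y : Y | (x₀, y) ∈ B} < t) :
    x₀ ∉ closure {x : X | t ≤ σ.cval {y : Y | (x, y) ∈ B}} := by
  have hslice : ∀ x : X, IsClosed {y : Y | (x, y) ∈ B} := fun x =>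
    hB.preimage (Continuous.prodMk_right x)
  rw [σ.cval_of_isClosed (hslice x₀)] at hx₀
  obtain ⟨O, hO, hsub, hall⟩ := σ.usc' _ t hx₀
  set P : Set X := Prod.fst '' (B ∩ (univ ×ˢ Oᶜ)) with hP
  have hPclosed : IsClosed P :=
    isClosedMap_fst_of_compactSpace _ (hB.inter (isClosed_univ.prod (isClosed_compl_iff.2 hO)))
  have hx₀P : x₀ ∉ P := by
    rintro ⟨⟨x, y⟩, ⟨hmem, -, hy⟩, rfl⟩
    exact hy (hsub hmem)
  intro hcl
  rw [mem_closure_iff] at hcl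
  obtain ⟨x, hxP, hxS⟩ := hcl Pᶜ hPclosed.isOpen_compl hx₀P
  have hsl : {y : Y | (x, y) ∈ B} ⊆ O := by
    intro y hy
    by_contra hyO
    exact hxP ⟨(x, y), ⟨hy, trivial, hyO⟩, rfl⟩
  have := hall ⟨_, hslice x⟩ hsl
  simp only [Set.mem_setOf_eq, σ.cval_of_isClosed (hslice x)] at hxS
  linarith

lemma tensor_aux : ∀ (m : ℕ) (X : Fin m → Type u)
    [inst : ∀ j, TopologicalSpace (X j)] [instC : ∀ j, CompactSpace (X j)]
    [instT : ∀ j, T2Space (X j)]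
    (ast : Tnorm) (A : ∀ j, Set (X j)) (_hA : ∀ j, IsClosed (A j))
    (μ : ∀ j, Capacity (X j)) (hμ : ∀ j, (μ j).oval ((A j)ᶜ) = 0)
    (τ : Capacity (∀ j, X j)), IsTensorRec ast μ τ → τ.oval ((Set.univ.pi A)ᶜ) = 0 := by
  intro m
  induction m with
  | zero =>
    intro X inst instC instT ast A hA μ hμ τ _
    apply Capacity.oval_eq_zero
    intro K hK
    have hpi : (Set.univ.pi A : Set (∀ j, X j)) = univ := by
      ext f
      simp only [Set.mem_pi, mem_univ, iff_true]
      exact fun i _ => i.elim0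
    rw [hpi, compl_univ, Set.subset_empty_iff] at hK
    have : K = ⊥ := Closeds.ext hK
    rw [this, τ.empty']
  | succ n ih =>
    intro X inst instC instT ast A hA μ hμ τ hτ
    obtain ⟨σ, hσrec, hval⟩ := hτ
    have hσ : σ.oval ((Set.univ.pi (fun k : Fin n => A ((0 : Fin (n+1)).succAbove k)))ᶜ) = 0 :=
      ih _ ast _ (fun k => hA _) _ (fun k => hμ _) σ hσrec
    apply Capacity.oval_eq_zero
    intro K hK
    set e : (∀ j, X j) → (X 0 × ∀ k : Fin n, X ((0 : Fin (n+1)).succAbove k)) :=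
      fun z => (z 0, fun k => z ((0 : Fin (n+1)).succAbove k)) with he
    have hcont : Continuous e :=
      (continuous_apply 0).prodMk (continuous_pi fun k => continuous_apply _)
    have hclosedmap : IsClosedMap e := hcont.isClosedMap
    set B' := e '' (K : Set (∀ j, X j)) with hB'
    have hB'closed : IsClosed B' := hclosedmap _ K.isClosed
    have hτK : τ.toFun K = tensorVal₂ ast (μ 0) σ B' := by
      have h := hval (K : Set (∀ j, X j)) K.isClosed
      rwa [τ.cval_of_isClosed K.isClosed] at h
    rw [hτK]
    have hall : ∀ t ∈ Icc (0:ℝ) 1,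
        ast.toFun ((μ 0).cval {x | t ≤ σ.cval {y | (x, y) ∈ B'}}) t = 0 := by
      intro t ht
      rcases eq_or_lt_of_le ht.1 with h0 | h0
      · rw [← h0]; exact ast.zero_right ((μ 0).cval_mem _)
      · have hSt : (μ 0).cval {x | t ≤ σ.cval {y | (x, y) ∈ B'}} = 0 := by
          have hsub : closure {x | t ≤ σ.cval {y | (x, y) ∈ B'}} ⊆ (A 0)ᶜ := by
            intro x₀ hx₀cl hx₀A
            refine slice_usc hB'closed σ ?_ hx₀cl
            have hslc : IsClosed {y | (x₀, y) ∈ B'} :=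
              hB'closed.preimage (Continuous.prodMk_right x₀)
            have hsub2 : {y | (x₀, y) ∈ B'} ⊆
                (Set.univ.pi (fun k : Fin n => A ((0 : Fin (n+1)).succAbove k)))ᶜ := by
              rintro y ⟨z, hz, hez⟩ hyA
              have hz0 : z 0 = x₀ := congrArg Prod.fst hez
              have hzs : (fun k : Fin n => z ((0 : Fin (n+1)).succAbove k)) = y :=
                congrArg Prod.snd hez
              have hzpi : z ∈ Set.univ.pi A := by
                intro j _
                refine Fin.cases ?_ ?_ j
                · rw [hz0]; exact hx₀A
                · intro k
                  have hyk := hyA k (mem_univ k)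
                  rw [← hzs] at hyk
                  simp only [Fin.zero_succAbove] at hyk
                  exact hyk
              exact hK hz hzpi
            have hz : σ.cval {y | (x₀, y) ∈ B'} = 0 := by
              rw [σ.cval_of_isClosed hslc]
              exact Capacity.toFun_eq_zero_of_oval hσ ⟨_, hslc⟩ hsub2
            rw [hz]; exact h0
          exact Capacity.toFun_eq_zero_of_oval (hμ 0) ⟨_, isClosed_closure⟩ hsub
        rw [hSt]; exact ast.zero_left ht
    have hset : {r : ℝ | ∃ t ∈ Icc (0:ℝ) 1,
        r = ast.toFun ((μ 0).cval {x | t ≤ σ.cval {y | (x, y) ∈ B'}}) t} = {0} := by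
      apply Set.eq_singleton_iff_unique_mem.2
      constructor
      · exact ⟨0, ⟨le_rfl, zero_le_one⟩, (hall 0 ⟨le_rfl, zero_le_one⟩).symm⟩
      · rintro r ⟨t, ht, rfl⟩; exact hall t ht
    rw [tensorVal₂, hset, csSup_singleton]

/-- if `μᵢ(Xᵢ ∖ Aᵢ) = 0` (value on the open complement via the
sup-extension) for closed sets `Aᵢ`, then the tensor product (generated by any
continuous t-norm) of the `μᵢ` vanishes on `∏ Xᵢ ∖ ∏ Aᵢ`. -/
theorem tensor_product_supported_in_product {m : ℕ} (X : Fin m → Type u)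
    [∀ j, TopologicalSpace (X j)] [∀ j, CompactSpace (X j)] [∀ j, T2Space (X j)]
    (ast : Tnorm) (hast : ast.Cont)
    (A : ∀ j, Set (X j)) (hA : ∀ j, IsClosed (A j))
    (μ : ∀ j, Capacity (X j)) (hμ : ∀ j, (μ j).oval ((A j)ᶜ) = 0)
    (τ : Capacity (∀ j, X j)) (hτ : IsTensorRec ast μ τ) :
    τ.oval ((Set.univ.pi A)ᶜ) = 0 :=
  tensor_aux m X ast A hA μ hμ τ hτ
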